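/- arXiv:2312.00328 — 4 statements merged into one kernel-verified Lean document; each statement's English description precedes it below -/
import Mathlib

section
/- Suppose A ∈ ℝ^{n×n} is stable, G, H ∈ ℝ^{n×n} are symmetric positive semidefinite, and X, X̂ are symmetric matrices with X̂ ≥ 0 satisfying (Aᵀ − X̂G)X̂ + X̂(A − GX̂) ≤ −H − X̂GX̂. If additionally the pair (H, A) is detectable (i.e., Ax = λx with Re(λ) ≥ 0 and Hx = 0 implies x = 0), then the matrix A − GX̂ is stable. -/
open Matrix
open scoped ComplexOrder

private lemma mapC_mul {n : ℕ} (M N : Matrix (Fin n) (Fin n) ℝ) :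
    (M * N).map Complex.ofReal = M.map Complex.ofReal * N.map Complex.ofReal := by
  ext i j
  simp [Matrix.mul_apply, Matrix.map_apply]

private lemma mapC_sub {n : ℕ} (M N : Matrix (Fin n) (Fin n) ℝ) :
    (M - N).map Complex.ofReal = M.map Complex.ofReal - N.map Complex.ofReal := by
  ext i j; simp [Matrix.map_apply]

private lemma mapC_neg {n : ℕ} (M : Matrix (Fin n) (Fin n) ℝ) :
    (-M).map Complex.ofReal = -(M.map Complex.ofReal) := by
  ext i j; simp [Matrix.map_apply]

private lemma mapC_add {n : ℕ} (M N : Matrix (Fin n) (Fin n) ℝ) :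
    (M + N).map Complex.ofReal = M.map Complex.ofReal + N.map Complex.ofReal := by
  ext i j; simp [Matrix.map_apply]

private lemma mapC_conjTranspose {n : ℕ} (M : Matrix (Fin n) (Fin n) ℝ) :
    (M.map Complex.ofReal)ᴴ = Mᵀ.map Complex.ofReal := by
  ext i j
  simp [Matrix.conjTranspose_apply, Matrix.map_apply, Complex.conj_ofReal]

private lemma mapC_posSemidef {n : ℕ} {M : Matrix (Fin n) (Fin n) ℝ}
    (hM : M.PosSemidef) : (M.map Complex.ofReal).PosSemidef := by
  obtain ⟨B, rfl⟩ : ∃ B : Matrix (Fin n) (Fin n) ℝ, M = Bᴴ * B := by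
    open scoped MatrixOrder in
    exact (CStarAlgebra.nonneg_iff_eq_star_mul_self.mp hM.nonneg).imp fun B h => h
  have : (Bᴴ : Matrix (Fin n) (Fin n) ℝ) = Bᵀ := by
    ext i j; simp [Matrix.conjTranspose_apply]
  rw [this, mapC_mul, ← mapC_conjTranspose]
  exact Matrix.posSemidef_conjTranspose_mul_self _

private lemma transpose_of_symm {n : ℕ} {M : Matrix (Fin n) (Fin n) ℝ}
    (hM : Mᴴ = M) : Mᵀ = M := by
  ext i j
  have := congrFun (congrFun hM i) j
  simpa [Matrix.conjTranspose_apply] using this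

/-- If `A` is stable, `G, H` are symmetric PSD, `X̂ ≥ 0` is symmetric with
`(Aᵀ − X̂G)X̂ + X̂(A − GX̂) ≤ −H − X̂GX̂` and `(H, A)` is detectable, then
`A − GX̂` is stable. -/
theorem stmt_5 {n : ℕ} (A G H Xh : Matrix (Fin n) (Fin n) ℝ)
    (hA : ∀ μ ∈ spectrum ℂ (A.map Complex.ofReal), μ.re < 0)
    (hG : G.PosSemidef) (hH : H.PosSemidef) (hXh : Xh.PosSemidef)
    (hineq : ((-H - Xh * G * Xh) - ((Aᵀ - Xh * G) * Xh + Xh * (A - G * Xh))).PosSemidef)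
    (hdet : ∀ (lam : ℂ) (x : Fin n → ℂ), (A.map Complex.ofReal) *ᵥ x = lam • x →
      0 ≤ lam.re → (H.map Complex.ofReal) *ᵥ x = 0 → x = 0) :
    ∀ μ ∈ spectrum ℂ ((A - G * Xh).map Complex.ofReal), μ.re < 0 := by
  intro μ hμ
  by_contra hre
  push_neg at hre
  set Aℂ := A.map Complex.ofReal with hAℂ
  set Gℂ := G.map Complex.ofReal with hGℂ
  set Hℂ := H.map Complex.ofReal with hHℂ
  set Xℂ := Xh.map Complex.ofReal with hXℂ
  set Bℂ := (A - G * Xh).map Complex.ofReal with hBℂ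
  have hBeq : Bℂ = Aℂ - Gℂ * Xℂ := by rw [hBℂ, mapC_sub, mapC_mul]
  -- eigenvector
  have hev : Module.End.HasEigenvalue (Matrix.toLinAlgEquiv' Bℂ) μ := by
    rw [Module.End.hasEigenvalue_iff_mem_spectrum]
    rwa [AlgEquiv.spectrum_eq (Matrix.toLinAlgEquiv' : Matrix (Fin n) (Fin n) ℂ ≃ₐ[ℂ] _) Bℂ]
  obtain ⟨x, hx⟩ := hev.exists_hasEigenvector
  have hxne : x ≠ 0 := hx.right
  have hBx : Bℂ *ᵥ x = μ • x := hx.apply_eq_smul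
  -- symmetry facts
  have hXhT : Xhᵀ = Xh := transpose_of_symm hXh.isHermitian.eq
  have hGT : Gᵀ = G := transpose_of_symm hG.isHermitian.eq
  have hXherm : Xℂᴴ = Xℂ := by rw [mapC_conjTranspose, hXhT]
  -- Bℂᴴ
  have hBH : Bℂᴴ = (Aᵀ - Xh * G).map Complex.ofReal := by
    rw [hBℂ, mapC_conjTranspose]
    congr 1
    rw [Matrix.transpose_sub, Matrix.transpose_mul, hXhT, hGT]
  -- PSD over ℂ
  have hGC := mapC_posSemidef hG
  have hHC := mapC_posSemidef hH
  have hXC := mapC_posSemidef hXh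
  have hMC := mapC_posSemidef hineq
  -- scalar quantities
  set s : ℂ := star x ⬝ᵥ Xℂ *ᵥ x with hs
  set h : ℂ := star x ⬝ᵥ Hℂ *ᵥ x with hh
  set g : ℂ := star x ⬝ᵥ (Xℂ * Gℂ * Xℂ) *ᵥ x with hg
  have hs0 : 0 ≤ s := hXC.dotProduct_mulVec_nonneg x
  have hh0 : 0 ≤ h := hHC.dotProduct_mulVec_nonneg x
  have hg0 : 0 ≤ g := (hXherm ▸ hGC.conjTranspose_mul_mul_same Xℂ).dotProduct_mulVec_nonneg x
  -- the main inequality, mapped to ℂ and evaluated at x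
  have htot : (0 : ℂ) ≤ -h - g - ((starRingEnd ℂ) μ * s + μ * s) := by
    have h0 := hMC.dotProduct_mulVec_nonneg x
    have hMeq : ((-H - Xh * G * Xh) - ((Aᵀ - Xh * G) * Xh + Xh * (A - G * Xh))).map
        Complex.ofReal
        = (-Hℂ - Xℂ * Gℂ * Xℂ) - (Bℂᴴ * Xℂ + Xℂ * Bℂ) := by
      rw [mapC_sub, mapC_sub, mapC_neg, mapC_mul, mapC_mul, mapC_add, mapC_mul, mapC_mul,
        hBH]
    rw [hMeq] at h0
    have e1 : star x ⬝ᵥ (Xℂ * Bℂ) *ᵥ x = μ * s := by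
      rw [← Matrix.mulVec_mulVec, hBx, Matrix.mulVec_smul, dotProduct_smul,
        smul_eq_mul, hs]
    have e2 : star x ⬝ᵥ (Bℂᴴ * Xℂ) *ᵥ x = (starRingEnd ℂ) μ * s := by
      rw [← Matrix.mulVec_mulVec, Matrix.dotProduct_mulVec, ← Matrix.star_mulVec, hBx]
      rw [star_smul, smul_dotProduct, smul_eq_mul, hs]
      rfl
    calc (0 : ℂ) ≤ star x ⬝ᵥ ((-Hℂ - Xℂ * Gℂ * Xℂ) - (Bℂᴴ * Xℂ + Xℂ * Bℂ)) *ᵥ x := h0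
      _ = -h - g - ((starRingEnd ℂ) μ * s + μ * s) := by
          rw [Matrix.sub_mulVec, Matrix.sub_mulVec, Matrix.add_mulVec, Matrix.neg_mulVec,
            dotProduct_sub, dotProduct_sub, dotProduct_add,
            dotProduct_neg, e1, e2, hh, hg]
  -- pass to real parts
  rw [Complex.le_def] at hs0 hh0 hg0 htot
  obtain ⟨hsre, hsim⟩ := hs0
  obtain ⟨hhre, hhim⟩ := hh0
  obtain ⟨hgre, hgim⟩ := hg0
  have hsim' : s.im = 0 := by simpa using hsim.symm
  have hhim' : h.im = 0 := by simpa using hhim.symm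
  have hgim' : g.im = 0 := by simpa using hgim.symm
  have hsre' : (0:ℝ) ≤ s.re := by simpa using hsre
  have hhre' : (0:ℝ) ≤ h.re := by simpa using hhre
  have hgre' : (0:ℝ) ≤ g.re := by simpa using hgre
  have htotre := htot.1
  simp only [Complex.zero_re, Complex.sub_re, Complex.add_re, Complex.neg_re,
    Complex.mul_re, Complex.conj_re, Complex.conj_im, hsim', mul_zero, neg_zero,
    sub_zero] at htotre
  have hmul : 0 ≤ μ.re * s.re := mul_nonneg hre hsre'
  have hhre0 : h.re = 0 := by linarith
  have hgre0 : g.re = 0 := by linarith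
  -- conclude H x = 0
  have hHx : Hℂ *ᵥ x = 0 := by
    rw [← hHC.dotProduct_mulVec_zero_iff, ← hh]
    exact Complex.ext hhre0 hhim'
  -- conclude G (Xℂ x) = 0
  have hGXx : Gℂ *ᵥ (Xℂ *ᵥ x) = 0 := by
    rw [← hGC.dotProduct_mulVec_zero_iff]
    have : star (Xℂ *ᵥ x) ⬝ᵥ Gℂ *ᵥ (Xℂ *ᵥ x) = g := by
      rw [hg, ← Matrix.mulVec_mulVec, ← Matrix.mulVec_mulVec, Matrix.star_mulVec, hXherm,
        ← Matrix.dotProduct_mulVec]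
    rw [this, hg]
    rw [← hg]
    exact Complex.ext hgre0 hgim'
  -- A x = μ x
  have hAx : Aℂ *ᵥ x = μ • x := by
    have : Aℂ = Bℂ + Gℂ * Xℂ := by rw [hBeq]; abel
    rw [this, Matrix.add_mulVec, hBx, ← Matrix.mulVec_mulVec, hGXx, add_zero]
  exact hxne (hdet μ x hAx hre hHx)
end

section
/- Let Q, L, R be such that R > 0 and Q − L R⁻¹ Lᵀ = CᵀC for some matrix C, let X ≥ 0 be symmetric PSD, and define Π(X) as the PSD block matrix built from matrices A_0^i, B_0^i. Set L_c = L + Π₁₂(X), R_c = R + Π₂₂(X), Q_c = Q + Π₁₁(X). Then Λ(X) := (Q − CᵀC + Π₁₁(X)) − L_c R_c⁻¹ L_cᵀ ≥ 0 and H_c(X) := Q_c − L_c R_c⁻¹ L_cᵀ = CᵀC + Λ(X) ≥ 0. -/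
open Matrix BigOperators

private lemma psd_sum {ι k : Type*} [Fintype ι] [Fintype k] (f : ι → Matrix k k ℝ)
    (hf : ∀ i, (f i).PosSemidef) : (∑ i, f i).PosSemidef := by
  classical
  refine Finset.sum_induction f _ (fun a b ha hb => ha.add hb) ?_ (fun i _ => hf i)
  exact Matrix.PosSemidef.zero

/-- With `Q − LR⁻¹Lᵀ = CᵀC`, `X ≥ 0`, and the shifted data
`L_c = L + Π₁₂(X)`, `R_c = R + Π₂₂(X)`, `Q_c = Q + Π₁₁(X)`, the matrix
`Λ(X) = (Q − CᵀC + Π₁₁(X)) − L_c R_c⁻¹ L_cᵀ` is PSD and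
`H_c(X) = Q_c − L_c R_c⁻¹ L_cᵀ = CᵀC + Λ(X) ≥ 0`. -/
theorem stmt_8 {n m p r : ℕ}
    (A0 : Fin r → Matrix (Fin n) (Fin n) ℝ) (B0 : Fin r → Matrix (Fin n) (Fin m) ℝ)
    (Q : Matrix (Fin n) (Fin n) ℝ) (L : Matrix (Fin n) (Fin m) ℝ)
    (R : Matrix (Fin m) (Fin m) ℝ) (C : Matrix (Fin p) (Fin n) ℝ)
    (X : Matrix (Fin n) (Fin n) ℝ)
    (hR : R.PosDef) (hQ : Q.IsSymm)
    (hC : Q - L * R⁻¹ * Lᵀ = Cᵀ * C) (hX : X.PosSemidef) :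
    let Pi11 := ∑ i, (A0 i)ᵀ * X * A0 i
    let Pi12 := ∑ i, (A0 i)ᵀ * X * B0 i
    let Pi22 := ∑ i, (B0 i)ᵀ * X * B0 i
    let Lc := L + Pi12
    let Rc := R + Pi22
    let Qc := Q + Pi11
    let Lam := (Q - Cᵀ * C + Pi11) - Lc * Rc⁻¹ * Lcᵀ
    Lam.PosSemidef ∧ Qc - Lc * Rc⁻¹ * Lcᵀ = Cᵀ * C + Lam ∧
      (Qc - Lc * Rc⁻¹ * Lcᵀ).PosSemidef := by
  intro Pi11 Pi12 Pi22 Lc Rc Qc Lam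
  classical
  have hXsymm : Xᵀ = X := hX.isHermitian.eq
  -- Π(X) as a block matrix is PSD
  have hPiBlock : (fromBlocks Pi11 Pi12 Pi12ᵀ Pi22).PosSemidef := by
    have : fromBlocks Pi11 Pi12 Pi12ᵀ Pi22
        = ∑ i, fromBlocks ((A0 i)ᵀ * X * A0 i) ((A0 i)ᵀ * X * B0 i)
            ((B0 i)ᵀ * X * A0 i) ((B0 i)ᵀ * X * B0 i) := by
      have hT : Pi12ᵀ = ∑ i, (B0 i)ᵀ * X * A0 i := by
        simp only [Pi12, Matrix.transpose_sum, Matrix.transpose_mul,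
          Matrix.transpose_transpose, hXsymm, Matrix.mul_assoc]
      rw [hT]
      ext (i | i) (j | j) <;>
        simp [Pi11, Pi12, Pi22, Matrix.fromBlocks, Finset.sum_apply, Matrix.sum_apply, Matrix.mul_assoc]
    rw [this]
    apply psd_sum
    intro i
    have := hX.conjTranspose_mul_mul_same (fromCols (A0 i) (B0 i))
    simpa only [conjTranspose_eq_transpose_of_trivial, transpose_fromCols,
      fromRows_mul, fromRows_mul_fromCols, mul_fromCols,
      fromRows_fromCols_eq_fromBlocks, fromCols_fromRows_eq_fromBlocks,
      Matrix.mul_assoc] using this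
  -- the "base" block matrix is PSD
  have hRinv : R⁻¹.PosSemidef := hR.inv.posSemidef
  have hBase : (fromBlocks (L * R⁻¹ * Lᵀ) L Lᵀ R).PosSemidef := by
    haveI := hR.isUnit.invertible
    have h0 : ((L * R⁻¹ * Lᵀ) - L * R⁻¹ * Lᵀ).PosSemidef := by
      simpa using Matrix.PosSemidef.zero
    have := (Matrix.PosDef.fromBlocks₂₂ (L * R⁻¹ * Lᵀ) L hR).mpr
    simp only [conjTranspose_eq_transpose_of_trivial] at this
    exact this h0
  -- the sum is PSD
  have hSum : (fromBlocks (L * R⁻¹ * Lᵀ + Pi11) Lc Lcᵀ Rc).PosSemidef := by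
    have heq : fromBlocks (L * R⁻¹ * Lᵀ + Pi11) Lc Lcᵀ Rc
        = fromBlocks (L * R⁻¹ * Lᵀ) L Lᵀ R + fromBlocks Pi11 Pi12 Pi12ᵀ Pi22 := by
      have hLcT : Lcᵀ = Lᵀ + Pi12ᵀ := Matrix.transpose_add _ _
      rw [Matrix.fromBlocks_add, hLcT]
    rw [heq]
    exact hBase.add hPiBlock
  -- Rc is positive definite
  have hRc : Rc.PosDef := hR.add_posSemidef (psd_sum _ fun i => hX.conjTranspose_mul_mul_same (B0 i))
  haveI := hRc.isUnit.invertible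
  -- Schur complement
  have hSchur : ((L * R⁻¹ * Lᵀ + Pi11) - Lc * Rc⁻¹ * Lcᵀ).PosSemidef := by
    have := (Matrix.PosDef.fromBlocks₂₂ (L * R⁻¹ * Lᵀ + Pi11) Lc hRc).mp
    simp only [conjTranspose_eq_transpose_of_trivial] at this
    exact this hSum
  have hQCC : Q - Cᵀ * C = L * R⁻¹ * Lᵀ := by
    rw [← hC]; abel
  have hLam : Lam.PosSemidef := by
    have : Lam = (L * R⁻¹ * Lᵀ + Pi11) - Lc * Rc⁻¹ * Lcᵀ := by
      simp only [Lam]; rw [hQCC]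
    rw [this]; exact hSchur
  refine ⟨hLam, ?_, ?_⟩
  · simp only [Qc, Lam]; abel
  · have : Qc - Lc * Rc⁻¹ * Lcᵀ = Cᵀ * C + Lam := by simp only [Qc, Lam]; abel
    rw [this]
    have hCC : (Cᵀ * C).PosSemidef := by
      simpa only [conjTranspose_eq_transpose_of_trivial] using
        Matrix.posSemidef_conjTranspose_mul_self C
    exact hCC.add hLam
end

section
/- If X and Y are symmetric PSD n×n real matrices with X ≥ Y, then Ω(X) ≥ Ω(Y), where Ω(Z) is the Schur complement of R_c(Z) in Γ(Z) as defined from the SCARE data. Consequently, for any W ∈ ℝ^{2n×n}, Wᵀ Ω(X) W ≥ Wᵀ Ω(Y) W. -/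
open Matrix BigOperators

lemma psd_sum' {l : Type*} [Fintype l] [DecidableEq l] {r : ℕ}
    (f : Fin r → Matrix l l ℝ) (h : ∀ i, (f i).PosSemidef) : (∑ i, f i).PosSemidef :=
  Finset.sum_induction f _ (fun _ _ ha hb => ha.add hb) Matrix.PosSemidef.zero
    (fun i _ => h i)

lemma psd_conj' {k l : Type*} [Fintype k] [Fintype l] {M : Matrix l l ℝ} (hM : M.PosSemidef)
    (C : Matrix l k ℝ) : (Cᵀ * M * C).PosSemidef := by
  simpa [Matrix.conjTranspose_eq_transpose_of_trivial] using hM.conjTranspose_mul_mul_same C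

lemma fromRows_sub' {R : Type*} [AddGroup R] {n m k : Type*}
    (A₁ C₁ : Matrix n k R) (A₂ C₂ : Matrix m k R) :
    Matrix.fromRows A₁ A₂ - Matrix.fromRows C₁ C₂ = Matrix.fromRows (A₁ - C₁) (A₂ - C₂) := by
  ext (i|i) j <;> simp

lemma fromBlocks_sub' {R : Type*} [AddGroup R] {l n o p : Type*}
    (A E : Matrix l n R) (B F : Matrix l o R) (C G : Matrix p n R) (D H : Matrix p o R) :
    Matrix.fromBlocks A B C D - Matrix.fromBlocks E F G H
      = Matrix.fromBlocks (A-E) (B-F) (C-G) (D-H) := by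
  ext (i|i) (j|j) <;> simp

lemma JconjS {n : ℕ} (S : Matrix (Fin n) (Fin n) ℝ) :
    (Matrix.fromCols (0 : Matrix (Fin n) (Fin n) ℝ) 1)ᵀ * S *
      Matrix.fromCols (0 : Matrix (Fin n) (Fin n) ℝ) 1 = Matrix.fromBlocks 0 0 0 S := by
  rw [← Matrix.fromRows_fromCols_eq_fromBlocks]
  simp [transpose_fromCols, fromRows_mul, mul_fromCols]
  ext (i|i) (j|j) <;> simp

lemma JmulT {n m : ℕ} (T : Matrix (Fin n) (Fin m) ℝ) :
    (Matrix.fromCols (0 : Matrix (Fin n) (Fin n) ℝ) 1)ᵀ * T = Matrix.fromRows 0 T := by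
  simp [transpose_fromCols, fromRows_mul]


lemma expand' {p u v c : Type*} [Fintype p] [Fintype u] [Fintype v] [Fintype c]
    (A₁ : Matrix p u ℝ) (J : Matrix u c ℝ) (B₁ : Matrix p v ℝ) (K : Matrix v c ℝ)
    (D : Matrix p p ℝ) (hD : Dᵀ = D) :
    (A₁ * J - B₁ * K)ᵀ * D * (A₁ * J - B₁ * K)
      = Jᵀ * (A₁ᵀ * D * A₁) * J - (Jᵀ * (A₁ᵀ * D * B₁)) * K
        - Kᵀ * ((A₁ᵀ * D * B₁)ᵀ * J) + Kᵀ * (B₁ᵀ * D * B₁) * K := by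
  simp only [transpose_sub, transpose_mul, Matrix.sub_mul, Matrix.mul_sub, Matrix.mul_assoc, transpose_transpose, hD]
  abel

lemma sum_expand {r : ℕ} {p u v c : Type*} [Fintype p] [Fintype u] [Fintype v] [Fintype c]
    (A0 : Fin r → Matrix p u ℝ) (B0 : Fin r → Matrix p v ℝ)
    (J : Matrix u c ℝ) (K : Matrix v c ℝ) (D : Matrix p p ℝ) (hD : Dᵀ = D) :
    ∑ i, (A0 i * J - B0 i * K)ᵀ * D * (A0 i * J - B0 i * K)
      = Jᵀ * (∑ i, (A0 i)ᵀ * D * A0 i) * J - (Jᵀ * (∑ i, (A0 i)ᵀ * D * B0 i)) * K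
        - Kᵀ * ((∑ i, (A0 i)ᵀ * D * B0 i)ᵀ * J) + Kᵀ * (∑ i, (B0 i)ᵀ * D * B0 i) * K := by
  rw [Finset.sum_congr rfl (fun i _ => expand' (A0 i) J (B0 i) K D hD)]
  simp only [Finset.sum_sub_distrib, Finset.sum_add_distrib, Matrix.sum_mul, Matrix.mul_sum,
    Matrix.transpose_sum]

set_option maxHeartbeats 1000000 in
/-- Monotonicity of `Ω`: if `X ≥ Y ≥ 0` then `Ω(X) ≥ Ω(Y)` in the Loewner order,
and consequently `Wᵀ Ω(X) W ≥ Wᵀ Ω(Y) W` for every `W`. -/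
theorem stmt_10 {n m r : ℕ}
    (A : Matrix (Fin n) (Fin n) ℝ) (B : Matrix (Fin n) (Fin m) ℝ)
    (Q : Matrix (Fin n) (Fin n) ℝ) (L : Matrix (Fin n) (Fin m) ℝ)
    (R : Matrix (Fin m) (Fin m) ℝ)
    (A0 : Fin r → Matrix (Fin n) (Fin n) ℝ) (B0 : Fin r → Matrix (Fin n) (Fin m) ℝ)
    (X Y : Matrix (Fin n) (Fin n) ℝ)
    (hR : R.PosDef) (hX : X.PosSemidef) (hY : Y.PosSemidef) (hXY : (X - Y).PosSemidef) :
    let Rc := fun Z : Matrix (Fin n) (Fin n) ℝ => R + ∑ i, (B0 i)ᵀ * Z * B0 i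
    let Lc := fun Z : Matrix (Fin n) (Fin n) ℝ => L + ∑ i, (A0 i)ᵀ * Z * B0 i
    let Qc := fun Z : Matrix (Fin n) (Fin n) ℝ => Q + ∑ i, (A0 i)ᵀ * Z * A0 i
    let Ac := fun Z : Matrix (Fin n) (Fin n) ℝ => A - B * (Rc Z)⁻¹ * (Lc Z)ᵀ
    let Gc := fun Z : Matrix (Fin n) (Fin n) ℝ => B * (Rc Z)⁻¹ * Bᵀ
    let Hc := fun Z : Matrix (Fin n) (Fin n) ℝ => Qc Z - Lc Z * (Rc Z)⁻¹ * (Lc Z)ᵀ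
    let Ω := fun Z : Matrix (Fin n) (Fin n) ℝ =>
      Matrix.fromBlocks (-(Gc Z)) (-(Ac Z)) (-(Ac Z)ᵀ) (Hc Z)
    (Ω X - Ω Y).PosSemidef ∧
      ∀ W : Matrix (Fin n ⊕ Fin n) (Fin n) ℝ,
        (Wᵀ * Ω X * W - Wᵀ * Ω Y * W).PosSemidef := by
  intro Rc Lc Qc Ac Gc Hc Ω
  have hRcdef : ∀ Z, Rc Z = R + ∑ i, (B0 i)ᵀ * Z * B0 i := fun _ => rfl
  have hLcdef : ∀ Z, Lc Z = L + ∑ i, (A0 i)ᵀ * Z * B0 i := fun _ => rfl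
  have hQcdef : ∀ Z, Qc Z = Q + ∑ i, (A0 i)ᵀ * Z * A0 i := fun _ => rfl
  have hΩdef : ∀ Z, Ω Z = Matrix.fromBlocks (-(Gc Z)) (-(Ac Z)) (-(Ac Z)ᵀ) (Hc Z) :=
    fun _ => rfl
  have hGcdef : ∀ Z, Gc Z = B * (Rc Z)⁻¹ * Bᵀ := fun _ => rfl
  have hAcdef : ∀ Z, Ac Z = A - B * (Rc Z)⁻¹ * (Lc Z)ᵀ := fun _ => rfl
  have hHcdef : ∀ Z, Hc Z = Qc Z - Lc Z * (Rc Z)⁻¹ * (Lc Z)ᵀ := fun _ => rfl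
  -- symmetry facts
  have hXs : Xᵀ = X := by
    simpa [Matrix.conjTranspose_eq_transpose_of_trivial, Matrix.IsSymm] using hX.1
  have hYs : Yᵀ = Y := by
    simpa [Matrix.conjTranspose_eq_transpose_of_trivial, Matrix.IsSymm] using hY.1
  have hRs : Rᵀ = R := by
    simpa [Matrix.conjTranspose_eq_transpose_of_trivial, Matrix.IsSymm] using hR.1
  have hDs : (X - Y)ᵀ = X - Y := by simp [transpose_sub, hXs, hYs]
  have hRcs : ∀ Z : Matrix (Fin n) (Fin n) ℝ, Zᵀ = Z → (Rc Z)ᵀ = Rc Z := by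
    intro Z hZ
    simp [hRcdef, transpose_add, Matrix.transpose_sum, transpose_mul, Matrix.mul_assoc, hZ, hRs]
  -- positivity of Rc
  have hRcX : (Rc X).PosDef := by
    rw [hRcdef]; exact hR.add_posSemidef (psd_sum' _ fun i => psd_conj' hX (B0 i))
  have hRcY : (Rc Y).PosDef := by
    rw [hRcdef]; exact hR.add_posSemidef (psd_sum' _ fun i => psd_conj' hY (B0 i))
  have hXinv : Rc X * (Rc X)⁻¹ = 1 := Matrix.mul_nonsing_inv _ hRcX.det_pos.ne'.isUnit
  have hYinv : Rc Y * (Rc Y)⁻¹ = 1 := Matrix.mul_nonsing_inv _ hRcY.det_pos.ne'.isUnit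
  have hIXs : ((Rc X)⁻¹)ᵀ = (Rc X)⁻¹ := by rw [Matrix.transpose_nonsing_inv, hRcs X hXs]
  have hIYs : ((Rc Y)⁻¹)ᵀ = (Rc Y)⁻¹ := by rw [Matrix.transpose_nonsing_inv, hRcs Y hYs]
  -- abbreviations
  set J : Matrix (Fin n) (Fin n ⊕ Fin n) ℝ := Matrix.fromCols 0 1 with hJdef
  set CX : Matrix (Fin n ⊕ Fin n) (Fin m) ℝ := Matrix.fromRows (-B) (Lc X) with hCXdef
  set CY : Matrix (Fin n ⊕ Fin n) (Fin m) ℝ := Matrix.fromRows (-B) (Lc Y) with hCYdef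
  set KX : Matrix (Fin m) (Fin n ⊕ Fin n) ℝ := (Rc X)⁻¹ * CXᵀ with hKXdef
  set KY : Matrix (Fin m) (Fin n ⊕ Fin n) ℝ := (Rc Y)⁻¹ * CYᵀ with hKYdef
  -- Schur-complement form of Ω
  have hΩeq : ∀ Z : Matrix (Fin n) (Fin n) ℝ, ((Rc Z)⁻¹)ᵀ = (Rc Z)⁻¹ →
      Ω Z = Matrix.fromBlocks 0 (-A) (-Aᵀ) (Qc Z)
        - Matrix.fromRows (-B) (Lc Z) * ((Rc Z)⁻¹ * (Matrix.fromRows (-B) (Lc Z))ᵀ) := by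
    intro Z hZ
    rw [hΩdef, transpose_fromRows, mul_fromCols, fromRows_mul_fromCols, fromBlocks_sub']
    refine Matrix.fromBlocks_inj.mpr ⟨?_, ?_, ?_, ?_⟩
    · simp [hGcdef, Matrix.mul_assoc]
    · simp [hAcdef, Matrix.mul_assoc, neg_sub, sub_eq_neg_add]
      abel
    · simp [hAcdef, transpose_sub, transpose_mul, hZ, Matrix.mul_assoc, neg_sub, sub_eq_neg_add]
      abel
    · simp [hHcdef, Matrix.mul_assoc]
  -- difference identities
  have hQcd : Qc X - Qc Y = ∑ i, (A0 i)ᵀ * (X - Y) * A0 i := by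
    simp [hQcdef, Matrix.mul_sub, Matrix.sub_mul, Finset.sum_sub_distrib]
  have hLcd : Lc X - Lc Y = ∑ i, (A0 i)ᵀ * (X - Y) * B0 i := by
    simp [hLcdef, Matrix.mul_sub, Matrix.sub_mul, Finset.sum_sub_distrib]
  have hRd' : (∑ i, (B0 i)ᵀ * (X - Y) * B0 i) = Rc X - Rc Y := by
    simp [hRcdef, Matrix.mul_sub, Matrix.sub_mul, Finset.sum_sub_distrib]
  have hPd : Jᵀ * (∑ i, (A0 i)ᵀ * (X - Y) * A0 i) * J
      = Matrix.fromBlocks 0 (-A) (-Aᵀ) (Qc X) - Matrix.fromBlocks 0 (-A) (-Aᵀ) (Qc Y) := by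
    rw [hJdef, JconjS, ← hQcd]
    ext (i|i) (j|j) <;> simp
  have hCd2 : Jᵀ * (∑ i, (A0 i)ᵀ * (X - Y) * B0 i) = CX - CY := by
    rw [hJdef, JmulT, hCXdef, hCYdef, fromRows_sub', ← hLcd]
    simp
  have hCdT : (∑ i, (A0 i)ᵀ * (X - Y) * B0 i)ᵀ * J = (CX - CY)ᵀ := by
    rw [← hCd2]
    simp [transpose_mul]
  -- products with the inverse
  have hK1 : Rc X * KX = CXᵀ := by
    rw [hKXdef, ← Matrix.mul_assoc, hXinv, Matrix.one_mul]
  have hK2 : Rc Y * KY = CYᵀ := by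
    rw [hKYdef, ← Matrix.mul_assoc, hYinv, Matrix.one_mul]
  have hK1t : KXᵀ * Rc X = CX := by
    have h := congrArg Matrix.transpose hK1
    simpa [transpose_mul, hRcs X hXs] using h
  have hK2t : KYᵀ * Rc Y = CY := by
    have h := congrArg Matrix.transpose hK2
    simpa [transpose_mul, hRcs Y hYs] using h
  have hsymm : KXᵀ * CXᵀ = CX * KX := by
    rw [hKXdef]
    simp [transpose_mul, hIXs, Matrix.mul_assoc]
  have hsymmY : KYᵀ * CYᵀ = CY * KY := by
    rw [hKYdef]
    simp [transpose_mul, hIYs, Matrix.mul_assoc]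
  have hA1 : KXᵀ * (Rc X * KX) = CX * KX := by rw [hK1, hsymm]
  have hA3 : KYᵀ * (Rc Y * KX) = CY * KX := by rw [← Matrix.mul_assoc, hK2t]
  clear_value Rc Lc Qc Ac Gc Hc Ω J CX CY KX KY
  have hS1 := sum_expand A0 B0 J KX (X - Y) hDs
  -- the key identity
  have hkey : Ω X - Ω Y
      = (∑ i, (A0 i * J - B0 i * KX)ᵀ * (X - Y) * (A0 i * J - B0 i * KX))
        + (KX - KY)ᵀ * (Rc Y) * (KX - KY) := by
    rw [hΩeq X hIXs, hΩeq Y hIYs, ← hCXdef, ← hCYdef, ← hKXdef, ← hKYdef, hS1,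
      hPd, hCd2, hCdT, hRd']
    simp only [transpose_sub, Matrix.sub_mul, Matrix.mul_sub, Matrix.mul_assoc]
    rw [hA1, hA3, hK2, hsymm, hsymmY]
    abel
  have hpsd : (Ω X - Ω Y).PosSemidef := by
    rw [hkey]
    exact (psd_sum' _ fun i => psd_conj' hXY _).add (psd_conj' hRcY.posSemidef _)
  refine ⟨hpsd, fun W => ?_⟩
  have hW : Wᵀ * Ω X * W - Wᵀ * Ω Y * W = Wᵀ * (Ω X - Ω Y) * W := by
    simp [Matrix.mul_sub, Matrix.sub_mul]
  rw [hW]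
  exact psd_conj' hpsd W
end

section
/- Let A ∈ ℝ^{n×n}, G, H symmetric PSD, with (H, A) detectable. Let X̂ ≥ 0 be symmetric satisfying uᵀ[(Aᵀ − X̂G)X̂ + X̂(A − GX̂) + X̂GX̂ + H]u ≤ 0 for all u. If (A − GX̂)y = λy with y ≠ 0 and Re(λ) ≥ 0, then Hy = 0 and GX̂y = 0, hence Ay = λy; therefore by detectability no such y exists and A − GX̂ is stable. -/
open Matrix
open scoped ComplexOrder

private lemma psd_map_ofReal {n : ℕ} {M : Matrix (Fin n) (Fin n) ℝ} (h : M.PosSemidef) :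
    (M.map Complex.ofReal).PosSemidef := by
  obtain ⟨B, rfl⟩ : ∃ B : Matrix (Fin n) (Fin n) ℝ, M = Bᴴ * B := by
    open scoped MatrixOrder in exact CStarAlgebra.nonneg_iff_eq_star_mul_self.mp h.nonneg
  have : (Bᴴ * B).map Complex.ofReal = (B.map Complex.ofReal)ᴴ * (B.map Complex.ofReal) := by
    rw [show (Bᴴ*B).map Complex.ofReal = (Bᴴ*B).map Complex.ofRealHom from rfl, Matrix.map_mul]
    congr 1
    rw [← Matrix.conjTranspose_map]
    · rfl
    · intro a; simp [Complex.conj_ofReal]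
  rw [this]
  exact posSemidef_conjTranspose_mul_self _

private lemma map_mulVec_star {n : ℕ} (M : Matrix (Fin n) (Fin n) ℝ) (y : Fin n → ℂ) :
    (M.map Complex.ofReal) *ᵥ star y = star ((M.map Complex.ofReal) *ᵥ y) := by
  ext i
  simp [mulVec, dotProduct, Complex.conj_ofReal, mul_comm]

private lemma sum3_zero {a b c : ℂ} (ha : 0 ≤ a) (hb : 0 ≤ b) (hc : 0 ≤ c)
    (h : a + b + c ≤ 0) : a = 0 ∧ b = 0 ∧ c = 0 := by
  have habc : a + b + c = 0 := le_antisymm h (add_nonneg (add_nonneg ha hb) hc)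
  have hbc : 0 ≤ b + c := add_nonneg hb hc
  have ha0 : a = 0 := by
    refine le_antisymm ?_ ha
    calc a = -(b + c) := by linear_combination habc
    _ ≤ 0 := neg_nonpos.mpr hbc
  have hb0 : b = 0 := by
    refine le_antisymm ?_ hb
    calc b = -c := by rw [ha0] at habc; linear_combination habc
    _ ≤ 0 := neg_nonpos.mpr hc
  exact ⟨ha0, hb0, by rw [ha0, hb0] at habc; linear_combination habc⟩

/-- If `(H, A)` is detectable, `X̂ ≥ 0` and
`(Aᵀ − X̂G)X̂ + X̂(A − GX̂) + X̂GX̂ + H ≤ 0` (as a quadratic form), then every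
eigenpair `(λ, y)` of `A − GX̂` with `Re λ ≥ 0` satisfies `Hy = 0`, `GX̂y = 0`,
and `Ay = λy`; consequently `A − GX̂` is stable. -/
theorem stmt_12 {n : ℕ} (A G H Xh : Matrix (Fin n) (Fin n) ℝ)
    (hG : G.PosSemidef) (hH : H.PosSemidef) (hXh : Xh.PosSemidef)
    (hdet : ∀ (lam : ℂ) (x : Fin n → ℂ), (A.map Complex.ofReal) *ᵥ x = lam • x →
      0 ≤ lam.re → (H.map Complex.ofReal) *ᵥ x = 0 → x = 0)
    (hineq : ∀ u : Fin n → ℝ,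
      u ⬝ᵥ (((Aᵀ - Xh * G) * Xh + Xh * (A - G * Xh) + Xh * G * Xh + H) *ᵥ u) ≤ 0) :
    (∀ (lam : ℂ) (y : Fin n → ℂ),
      ((A - G * Xh).map Complex.ofReal) *ᵥ y = lam • y → 0 ≤ lam.re →
        (H.map Complex.ofReal) *ᵥ y = 0 ∧ ((G * Xh).map Complex.ofReal) *ᵥ y = 0 ∧
          (A.map Complex.ofReal) *ᵥ y = lam • y) ∧
    (∀ μ ∈ spectrum ℂ ((A - G * Xh).map Complex.ofReal), μ.re < 0) := by
  -- symmetry of the real matrices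
  have hGs : Gᵀ = G := by
    ext i j; have := congrFun (congrFun hG.1 i) j; simpa using this
  have hHs : Hᵀ = H := by
    ext i j; have := congrFun (congrFun hH.1 i) j; simpa using this
  have hXs : Xhᵀ = Xh := by
    ext i j; have := congrFun (congrFun hXh.1 i) j; simpa using this
  set F : Matrix (Fin n) (Fin n) ℝ := A - G * Xh with hF
  set M : Matrix (Fin n) (Fin n) ℝ :=
    (Aᵀ - Xh * G) * Xh + Xh * (A - G * Xh) + Xh * G * Xh + H with hM
  -- M is symmetric
  have hMherm : M.IsHermitian := by
    have : Mᵀ = M := by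
      rw [hM]
      simp only [transpose_add, transpose_mul, transpose_sub, hGs, hHs, hXs,
        transpose_transpose]
      noncomm_ring
    simpa [Matrix.IsHermitian] using this
  have hnegM : (-M).PosSemidef := by
    refine .of_dotProduct_mulVec_nonneg hMherm.neg fun u => ?_
    have := hineq u
    rw [neg_mulVec, dotProduct_neg]
    simpa using neg_nonneg.mpr this
  -- complexifications
  set Fc := F.map Complex.ofReal with hFc
  set Ac := A.map Complex.ofReal with hAc
  set Gc := G.map Complex.ofReal with hGc
  set Hc := H.map Complex.ofReal with hHc
  set Xc := Xh.map Complex.ofReal with hXc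
  have hGcpsd : Gc.PosSemidef := psd_map_ofReal hG
  have hHcpsd : Hc.PosSemidef := psd_map_ofReal hH
  have hXcpsd : Xc.PosSemidef := psd_map_ofReal hXh
  have hnegMc : ((-M).map Complex.ofReal).PosSemidef := psd_map_ofReal hnegM
  -- the complexified M as a combination
  have hMc : M.map Complex.ofReal = Fcᵀ * Xc + Xc * Fc + Xc * Gc * Xc + Hc := by
    have hFt : Aᵀ - Xh * G = Fᵀ := by rw [hF, transpose_sub, transpose_mul, hGs, hXs]
    rw [hM, hFt, ← hF, hFc, hXc, hGc, hHc]
    ext i j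
    simp [Matrix.map_apply, mul_apply, Finset.mul_sum, Finset.sum_mul]
  have hGXc : (G * Xh).map Complex.ofReal = Gc * Xc := by
    rw [hGc, hXc]; ext i j
    simp [Matrix.map_apply, mul_apply]
  -- main eigenvector argument
  have main : ∀ (lam : ℂ) (y : Fin n → ℂ),
      Fc *ᵥ y = lam • y → 0 ≤ lam.re →
        Hc *ᵥ y = 0 ∧ ((G * Xh).map Complex.ofReal) *ᵥ y = 0 ∧ Ac *ᵥ y = lam • y := by
    intro lam y hy hre
    have hq : star y ⬝ᵥ ((M.map Complex.ofReal) *ᵥ y) ≤ 0 := by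
      have h0 := hnegMc.dotProduct_mulVec_nonneg y
      have hmn : (-M).map Complex.ofReal = -(M.map Complex.ofReal) := by
        ext i j; simp [Matrix.map_apply]
      rw [hmn, neg_mulVec, dotProduct_neg] at h0
      exact neg_nonneg.mp h0
    have hFstar : Fc *ᵥ star y = star (Fc *ᵥ y) := by
      rw [hFc]; exact map_mulVec_star F y
    have e1 : star y ⬝ᵥ (Fcᵀ * Xc) *ᵥ y
        = (starRingEnd ℂ) lam * (star y ⬝ᵥ Xc *ᵥ y) := by
      rw [← mulVec_mulVec, dotProduct_mulVec, vecMul_transpose, hFstar, hy, star_smul,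
        smul_dotProduct]
      rfl
    have e2 : star y ⬝ᵥ (Xc * Fc) *ᵥ y = lam * (star y ⬝ᵥ Xc *ᵥ y) := by
      rw [← mulVec_mulVec, hy, mulVec_smul, dotProduct_smul, smul_eq_mul]
    have e3 : star y ⬝ᵥ (Xc * Gc * Xc) *ᵥ y
        = star (Xc *ᵥ y) ⬝ᵥ Gc *ᵥ (Xc *ᵥ y) := by
      rw [← mulVec_mulVec, ← mulVec_mulVec, dotProduct_mulVec]
      congr 1
      rw [star_mulVec, hXcpsd.1]
    have hqX : 0 ≤ star y ⬝ᵥ Xc *ᵥ y := hXcpsd.dotProduct_mulVec_nonneg y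
    have hqG : 0 ≤ star (Xc *ᵥ y) ⬝ᵥ Gc *ᵥ (Xc *ᵥ y) := hGcpsd.dotProduct_mulVec_nonneg _
    have hqH : 0 ≤ star y ⬝ᵥ Hc *ᵥ y := hHcpsd.dotProduct_mulVec_nonneg y
    rw [hMc] at hq
    simp only [add_mulVec, dotProduct_add] at hq
    rw [e1, e2, e3] at hq
    have hscal : (0:ℂ) ≤ (starRingEnd ℂ) lam + lam := by
      have h2 : (starRingEnd ℂ) lam + lam = ((2 * lam.re : ℝ) : ℂ) := by
        rw [add_comm]; exact Complex.add_conj lam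
      rw [h2, Complex.zero_le_real]
      linarith
    have h1 : 0 ≤ ((starRingEnd ℂ) lam + lam) * (star y ⬝ᵥ Xc *ᵥ y) :=
      mul_nonneg hscal hqX
    have hsum : ((starRingEnd ℂ) lam + lam) * (star y ⬝ᵥ Xc *ᵥ y)
        + star (Xc *ᵥ y) ⬝ᵥ Gc *ᵥ (Xc *ᵥ y) + star y ⬝ᵥ Hc *ᵥ y ≤ 0 := by
      calc ((starRingEnd ℂ) lam + lam) * (star y ⬝ᵥ Xc *ᵥ y)
          + star (Xc *ᵥ y) ⬝ᵥ Gc *ᵥ (Xc *ᵥ y) + star y ⬝ᵥ Hc *ᵥ y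
          = (starRingEnd ℂ) lam * (star y ⬝ᵥ Xc *ᵥ y) + lam * (star y ⬝ᵥ Xc *ᵥ y)
          + star (Xc *ᵥ y) ⬝ᵥ Gc *ᵥ (Xc *ᵥ y) + star y ⬝ᵥ Hc *ᵥ y := by ring
      _ ≤ 0 := hq
    obtain ⟨_, hG0, hH0⟩ := sum3_zero h1 hqG hqH hsum
    have hHy : Hc *ᵥ y = 0 := (hHcpsd.dotProduct_mulVec_zero_iff y).mp hH0
    have hGXy : Gc *ᵥ (Xc *ᵥ y) = 0 := (hGcpsd.dotProduct_mulVec_zero_iff _).mp hG0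
    have hGXy' : ((G * Xh).map Complex.ofReal) *ᵥ y = 0 := by
      rw [hGXc, ← mulVec_mulVec]; exact hGXy
    refine ⟨hHy, hGXy', ?_⟩
    have hAFc : Ac = Fc + (G * Xh).map Complex.ofReal := by
      rw [hAc, hFc, hF]
      ext i j
      simp [Matrix.map_apply]
    rw [hAFc, add_mulVec, hGXy', add_zero, hy]
  refine ⟨main, fun μ hμ => ?_⟩
  by_contra hlt
  have hre : 0 ≤ μ.re := not_lt.mp hlt
  rw [spectrum.mem_iff] at hμ
  have hdetz : ((algebraMap ℂ (Matrix (Fin n) (Fin n) ℂ)) μ - Fc).det = 0 := by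
    by_contra hne
    exact hμ ((Matrix.isUnit_iff_isUnit_det _).mpr (isUnit_iff_ne_zero.mpr hne))
  obtain ⟨v, hv0, hv⟩ := Matrix.exists_mulVec_eq_zero_iff.mpr hdetz
  have halg : (algebraMap ℂ (Matrix (Fin n) (Fin n) ℂ)) μ *ᵥ v = μ • v := by
    ext i
    simp [Matrix.algebraMap_eq_diagonal, mulVec_diagonal]
  have hev : Fc *ᵥ v = μ • v := by
    rw [sub_mulVec, halg] at hv
    have := sub_eq_zero.mp hv
    rw [← this]
  obtain ⟨hHv, _, hAv⟩ := main μ v hev hre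
  exact hv0 (hdet μ v hAv hre hHv)
end
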